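/- Let r > 0 and T ≥ 0, and let p, q : [0, T] → ℝ² be continuous paths such that: the second coordinate of p(t) is 0 for all t; the second coordinate of q(t) lies in [−r, r] for all t; the first coordinate of p(0) is at most the first coordinate of q(0); and the first coordinate of q(T) is at most the first coordinate of p(T). Then there exists t* ∈ [0, T] with dist(p(t*), q(t*)) ≤ r; in particular the closed disks of radius r centered at p(t*) and q(t*) intersect, so their union is connected. -/

import Mathlib

open Metric Set

/-- Intermediate-value collision argument (Case C1 of Lemma 1): if robot `p` moves on the
`x`-axis, robot `q` stays in the horizontal strip of half-width `r`, `p` starts behind `q`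
and ends ahead of it, then at some time their centers are within distance `r`, hence the
union of their disks is connected. -/
theorem crossing_paths_collide (r T : ℝ) (hr : 0 < r) (hT : 0 ≤ T)
    (p q : ℝ → EuclideanSpace ℝ (Fin 2))
    (hp : ContinuousOn p (Icc 0 T)) (hq : ContinuousOn q (Icc 0 T))
    (hp2 : ∀ t ∈ Icc 0 T, p t 1 = 0)
    (hq2 : ∀ t ∈ Icc 0 T, q t 1 ∈ Icc (-r) r)
    (hstart : p 0 0 ≤ q 0 0)
    (hend : q T 0 ≤ p T 0) :
    ∃ t ∈ Icc 0 T, dist (p t) (q t) ≤ r ∧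
      IsConnected (closedBall (p t) r ∪ closedBall (q t) r) := by
  -- f t = p t 0 - q t 0
  have hf : ContinuousOn (fun t => p t 0 - q t 0) (Icc 0 T) := by
    apply ContinuousOn.sub
    · exact (EuclideanSpace.proj (0 : Fin 2) : EuclideanSpace ℝ (Fin 2) →L[ℝ] ℝ).continuous.comp_continuousOn hp
    · exact (EuclideanSpace.proj (0 : Fin 2) : EuclideanSpace ℝ (Fin 2) →L[ℝ] ℝ).continuous.comp_continuousOn hq
  have h0 : (0 : ℝ) ∈ Icc (p 0 0 - q 0 0) (p T 0 - q T 0) :=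
    ⟨by linarith, by linarith⟩
  obtain ⟨t, ht, hteq⟩ := intermediate_value_Icc hT hf h0
  simp only at hteq
  have ht2 : p t 0 = q t 0 := by linarith
  have hd : dist (p t) (q t) ≤ r := by
    have hq2t := hq2 t ht
    have hp2t := hp2 t ht
    rw [EuclideanSpace.dist_eq]
    have : ∑ i : Fin 2, dist (p t i) (q t i) ^ 2 = dist (p t 1) (q t 1) ^ 2 := by
      rw [Fin.sum_univ_two, ht2]
      simp [dist_self]
    rw [this]
    rw [Real.sqrt_sq_eq_abs, abs_of_nonneg dist_nonneg]
    rw [Real.dist_eq, hp2t]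
    rw [abs_sub_comm, abs_le]
    simpa using hq2t
  refine ⟨t, ht, hd, ?_⟩
  apply IsConnected.union
  · exact ⟨q t, mem_closedBall'.mpr hd, mem_closedBall_self hr.le⟩
  · exact (convex_closedBall _ _).isConnected (nonempty_closedBall.mpr hr.le)
  · exact (convex_closedBall _ _).isConnected (nonempty_closedBall.mpr hr.le)
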